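/- Let R be a Bézout domain (an integral domain in which every finitely generated ideal is principal) and a an ideal of R. Then Tor_1^R(R/a, R/a) ≅ a/a², and Tor_i^R(R/a, R/a) = 0 for all i > 1. In particular, if a is idempotent (a² = a), then the quotient map R → R/a is a homological epimorphism. -/

import Mathlib

open CategoryTheory CategoryTheory.Limits

universe u

namespace Stmt11Aux

open MonoidalCategory TensorProduct

/-- Every ideal of a Bézout domain is flat. -/
theorem flat_ideal_of_bezout {R : Type u} [CommRing R] [IsDomain R] [IsBezout R] (b : Ideal R) :
    Module.Flat R b := by
  rw [Module.Flat.iff_rTensor_injective]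
  intro I hI
  obtain ⟨x, hx⟩ := (IsBezout.isPrincipal_of_FG I hI).1
  subst hx
  by_cases hx0 : x = 0
  · subst hx0
    have hzero : ∀ z : (Ideal.span ({(0:R)} : Set R)) ⊗[R] b, z = 0 := by
      intro z
      induction z with
      | zero => rfl
      | tmul y m =>
        have : y = 0 := by
          ext
          simpa [Ideal.span_singleton_eq_bot.mpr rfl] using y.2
        rw [this, TensorProduct.zero_tmul]
      | add z₁ z₂ h₁ h₂ => rw [h₁, h₂, add_zero]
    intro u v _
    rw [hzero u, hzero v]
  · have key : ∀ z : (Ideal.span ({x} : Set R)) ⊗[R] b,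
        ∃ m : b, z = (⟨x, Ideal.subset_span rfl⟩ : Ideal.span ({x} : Set R)) ⊗ₜ[R] m := by
      intro z
      induction z with
      | zero => exact ⟨0, by simp⟩
      | tmul y m =>
        obtain ⟨c, hc⟩ := Ideal.mem_span_singleton'.mp y.2
        refine ⟨c • m, ?_⟩
        have : y = c • (⟨x, Ideal.subset_span rfl⟩ : Ideal.span ({x} : Set R)) := by
          ext; simpa [mul_comm] using hc.symm
        rw [this, smul_tmul]
      | add z₁ z₂ h₁ h₂ =>
        obtain ⟨m₁, rfl⟩ := h₁
        obtain ⟨m₂, rfl⟩ := h₂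
        exact ⟨m₁ + m₂, by rw [TensorProduct.tmul_add]⟩
    rw [injective_iff_map_eq_zero]
    intro z hz
    obtain ⟨m, rfl⟩ := key z
    rw [LinearMap.rTensor_tmul] at hz
    have := congrArg (TensorProduct.lid R b) hz
    simp only [map_zero] at this
    rw [TensorProduct.lid_tmul] at this
    have hm : (m : R) = 0 := by
      have h2 := congrArg (Submodule.subtype b) this
      simp only [map_smul, map_zero] at h2
      have : x * (m : R) = 0 := by simpa [smul_eq_mul] using h2
      rcases mul_eq_zero.mp this with h | h
      · exact absurd h hx0
      · exact h
    have : m = 0 := Subtype.ext hm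
    rw [this, TensorProduct.tmul_zero]

theorem mul'_bij {R : Type u} [CommRing R] (a : Ideal R) :
    Function.Bijective (LinearMap.mul' R (R ⧸ a)) := by
  have smul_one : ∀ r : R, r • (1 : R ⧸ a) = Ideal.Quotient.mk a r := by
    intro r
    have h : (1 : R ⧸ a) = Submodule.Quotient.mk (1:R) := rfl
    rw [h, ← Submodule.Quotient.mk_smul, smul_eq_mul, mul_one]
    rfl
  have key : ∀ z : (R ⧸ a) ⊗[R] (R ⧸ a), z = (LinearMap.mul' R (R ⧸ a) z) ⊗ₜ[R] 1 := by
    intro z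
    induction z with
    | zero => simp
    | tmul x y =>
      obtain ⟨r, rfl⟩ := Ideal.Quotient.mk_surjective (I := a) y
      have h1 : (x ⊗ₜ[R] (Ideal.Quotient.mk a r) : (R ⧸ a) ⊗[R] (R ⧸ a))
          = (r • x) ⊗ₜ[R] 1 := by
        rw [← smul_one r, TensorProduct.tmul_smul, TensorProduct.smul_tmul']
      rw [h1, LinearMap.mul'_apply]
      rw [mul_one]
    | add z₁ z₂ h₁ h₂ =>
      rw [map_add, TensorProduct.add_tmul]
      exact congrArg₂ (· + ·) h₁ h₂
  constructor
  · intro z w h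
    rw [key z, key w, h]
  · intro s
    exact ⟨s ⊗ₜ[R] 1, by simp [LinearMap.mul'_apply]⟩

lemma homologyMap_zero_of_deg0 {R : Type u} [CommRing R]
    {K₁ K₂ : HomologicalComplex (ModuleCat.{u} R) (ComplexShape.down ℕ)} (φ : K₁ ⟶ K₂)
    (h : φ.f 0 ≫ K₂.pOpcycles 0 = 0) : HomologicalComplex.homologyMap φ 0 = 0 := by
  have hop : HomologicalComplex.opcyclesMap φ 0 = 0 := by
    rw [← cancel_epi (K₁.pOpcycles 0), HomologicalComplex.p_opcyclesMap, comp_zero, h]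
  have hnat := HomologicalComplex.homologyι_naturality φ 0
  rw [hop, comp_zero] at hnat
  exact (cancel_mono (K₂.homologyι 0)).1 (by rw [hnat, zero_comp])

theorem tor_main {R : Type u} [CommRing R] [IsDomain R] [IsBezout R] (a : Ideal R) :
    Nonempty ((((Tor (ModuleCat.{u} R) 1).obj (ModuleCat.of R (R ⧸ a))).obj
        (ModuleCat.of R (R ⧸ a))) ≅ ModuleCat.of R a.Cotangent) ∧
    (∀ i : ℕ, 1 < i →
      IsZero (((Tor (ModuleCat.{u} R) i).obj (ModuleCat.of R (R ⧸ a))).obj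
        (ModuleCat.of R (R ⧸ a)))) := by
  classical
  let Qm : ModuleCat.{u} R := ModuleCat.of R (R ⧸ a)
  let Am : ModuleCat.{u} R := ModuleCat.of R a
  let Rm : ModuleCat.{u} R := ModuleCat.of R R
  haveI hAflat : Module.Flat R Am := flat_ideal_of_bezout a
  have hRflat : Module.Flat R Rm := Module.Flat.self (R := R)
  obtain ⟨P⟩ := (inferInstance : HasProjectiveResolution Qm).out
  let ι : Am ⟶ Rm := ModuleCat.ofHom a.subtype
  let pr : Rm ⟶ Qm := ModuleCat.ofHom a.mkQ
  let φ := (NatTrans.mapHomologicalComplex ((tensoringLeft (ModuleCat.{u} R)).map ι)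
    (ComplexShape.down ℕ)).app P.complex
  let ψ := (NatTrans.mapHomologicalComplex ((tensoringLeft (ModuleCat.{u} R)).map pr)
    (ComplexShape.down ℕ)).app P.complex
  haveI hproj : ∀ n, Module.Projective R (P.complex.X n) := fun n =>
    (IsProjective.iff_projective (P.complex.X n)).2 (P.projective n)
  haveI hflatP : ∀ n, Module.Flat R (P.complex.X n) := fun n =>
    letI := hproj n; Module.Flat.of_projective (R := R) (M := P.complex.X n)
  have hexact : ∀ n, Function.Exact (LinearMap.rTensor (P.complex.X n) a.subtype)
      (LinearMap.rTensor (P.complex.X n) a.mkQ) := by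
    intro n
    haveI := hflatP n
    exact Module.Flat.rTensor_exact (P.complex.X n) (LinearMap.exact_subtype_mkQ a)
  have hφψ : φ ≫ ψ = 0 := by
    apply HomologicalComplex.hom_ext
    intro n
    have : φ.f n ≫ ψ.f n = 0 := by
      apply ModuleCat.hom_ext
      apply LinearMap.ext
      intro z
      exact (hexact n).apply_apply_eq_zero z
    simpa using this
  let S : ShortComplex (HomologicalComplex (ModuleCat.{u} R) (ComplexShape.down ℕ)) :=
    ShortComplex.mk φ ψ hφψ
  have hS : S.ShortExact := by
    apply HomologicalComplex.shortExact_of_degreewise_shortExact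
    intro n
    refine ShortComplex.ShortExact.mk' ?_ ?_ ?_
    · show ((ShortComplex.mk φ ψ hφψ).map
        (HomologicalComplex.eval (ModuleCat.{u} R) _ n)).Exact
      rw [ShortComplex.ShortExact.moduleCat_exact_iff_function_exact]
      exact hexact n
    · show Mono (φ.f n)
      rw [ModuleCat.mono_iff_injective]
      haveI := hflatP n
      exact Module.Flat.rTensor_preserves_injective_linearMap a.subtype a.injective_subtype
    · show Epi (ψ.f n)
      rw [ModuleCat.epi_iff_surjective]
      exact LinearMap.rTensor_surjective (P.complex.X n) (Submodule.mkQ_surjective a)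
  -- vanishing of homology of flat-tensored resolution in positive degrees
  have vanish : ∀ (M : ModuleCat.{u} R), Module.Flat R M → ∀ (i : ℕ), 1 ≤ i →
      IsZero (((((tensoringLeft (ModuleCat.{u} R)).obj M).mapHomologicalComplex
        (ComplexShape.down ℕ)).obj P.complex).homology i) := by
    intro M hM i hi
    haveI := hM
    obtain ⟨n, rfl⟩ : ∃ n, i = n + 1 := ⟨i - 1, by omega⟩
    rw [← HomologicalComplex.exactAt_iff_isZero_homology]
    show ((((tensoringLeft (ModuleCat.{u} R)).obj M).mapHomologicalComplex
        (ComplexShape.down ℕ)).obj P.complex).ExactAt (n + 1)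
    rw [HomologicalComplex.exactAt_iff]
    have he : ((((tensoringLeft (ModuleCat.{u} R)).obj M).mapHomologicalComplex
        (ComplexShape.down ℕ)).obj P.complex).sc (n + 1)
        = (P.complex.sc (n + 1)).map (tensorLeft M) := rfl
    rw [he]
    exact Module.Flat.lTensor_shortComplex_exact M _ (P.complex_exactAt_succ n)
  -- the homology map in degree 0 induced by φ is zero
  have hu : HomologicalComplex.homologyMap φ 0 = 0 := by
    apply homologyMap_zero_of_deg0
    apply ModuleCat.hom_ext
    apply TensorProduct.ext'
    intro x p
    show ((((tensoringLeft (ModuleCat.{u} R)).obj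
        (ModuleCat.of R R)).mapHomologicalComplex
        (ComplexShape.down ℕ)).obj P.complex).pOpcycles 0 ((x.1 : R) ⊗ₜ[R] p) = 0
    have hπ : P.π.f 0 ((x.1 : R) • p) = 0 := by
      rw [map_smul]
      obtain ⟨r, hr⟩ := Submodule.Quotient.mk_surjective a
        (show (R ⧸ a) from P.π.f 0 p)
      show (x.1 : R) • (show (R ⧸ a) from P.π.f 0 p) = 0
      rw [← hr, ← Submodule.Quotient.mk_smul, Submodule.Quotient.mk_eq_zero]
      rw [smul_eq_mul]; exact a.mul_mem_right r x.2
    obtain ⟨z, hz⟩ := (ShortComplex.moduleCat_exact_iff _).1 P.exact₀ ((x.1 : R) • p) hπ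
    have key : (x.1 : R) ⊗ₜ[R] p = (LinearMap.lTensor R (P.complex.d 1 0).hom) ((1:R) ⊗ₜ[R] z) := by
      rw [LinearMap.lTensor_tmul, hz]
      rw [TensorProduct.tmul_smul, TensorProduct.smul_tmul', smul_eq_mul, mul_one]
    rw [key]
    have hd := (((((tensoringLeft (ModuleCat.{u} R)).obj
        (ModuleCat.of R R)).mapHomologicalComplex
        (ComplexShape.down ℕ)).obj P.complex)).d_pOpcycles 1 0
    exact congrArg (fun f => f ((1:R) ⊗ₜ[R] z)) hd
  -- identification of H₀ of the a-tensored complex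
  have hH0 : Nonempty ((S.X₁.homology 0) ≅ ModuleCat.of R a.Cotangent) := by
    haveI : PreservesColimitsOfSize.{0,0} ((tensoringLeft (ModuleCat.{u} R)).obj Am) :=
      (ihom.adjunction Am).leftAdjoint_preservesColimits
    have hcl2 := isColimitCoforkMapOfIsColimit' ((tensoringLeft (ModuleCat.{u} R)).obj Am)
      P.complex_d_comp_π_f_zero P.isColimitCokernelCofork
    have e1 : S.X₁.homology 0 ≅ S.X₁.opcycles 0 := ChainComplex.isoHomologyι₀ S.X₁
    have e2 : S.X₁.opcycles 0 ≅ ((tensoringLeft (ModuleCat.{u} R)).obj Am).obj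
        (((ChainComplex.single₀ (ModuleCat.{u} R)).obj Qm).X 0) :=
      IsColimit.coconePointUniqueUpToIso (S.X₁.opcyclesIsCokernel 1 0 (ChainComplex.prev ℕ 0))
        hcl2
    have e3 : ((tensoringLeft (ModuleCat.{u} R)).obj Am).obj
        (((ChainComplex.single₀ (ModuleCat.{u} R)).obj Qm).X 0) ≅ ModuleCat.of R a.Cotangent :=
      (TensorProduct.tensorQuotEquivQuotSMul (↥a) a).toModuleIso
    exact ⟨e1 ≪≫ e2 ≪≫ e3⟩
  -- the connecting map
  have hrel : (ComplexShape.down ℕ).Rel 1 0 := by simp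
  let δ := hS.δ 1 0 hrel
  have hδmono : Mono δ := by
    have h3 := hS.homology_exact₃ 1 0 hrel
    exact h3.mono_g ((vanish Rm hRflat 1 le_rfl).eq_of_src _ _)
  have hδepi : Epi δ := by
    have h1 := hS.homology_exact₁ 1 0 hrel
    exact h1.epi_f hu
  have hδiso : IsIso δ := by
    haveI := hδmono; haveI := hδepi
    exact isIso_of_mono_of_epi δ
  constructor
  · obtain ⟨e0⟩ := hH0
    exact ⟨P.isoLeftDerivedObj ((tensoringLeft (ModuleCat.{u} R)).obj Qm) 1 ≪≫ @asIso _ _ _ _ δ hδiso ≪≫ e0⟩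
  · intro i hi
    have hrel' : (ComplexShape.down ℕ).Rel i (i - 1) := by
      simp [ComplexShape.down_Rel]; omega
    have h3 := hS.homology_exact₃ i (i - 1) hrel'
    have hzero : IsZero (S.X₃.homology i) :=
      h3.isZero_X₂ ((vanish Rm hRflat i (by omega)).eq_of_src _ _)
        ((vanish Am hAflat (i - 1) (by omega)).eq_of_tgt _ _)
    exact hzero.of_iso (P.isoLeftDerivedObj ((tensoringLeft (ModuleCat.{u} R)).obj Qm) i)

end Stmt11Aux

/-- Over a Bézout domain `R`, for any ideal `a` one has `Tor_1^R(R/a, R/a) ≅ a/a²` and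
`Tor_i^R(R/a, R/a) = 0` for `i > 1`; in particular, if `a` is idempotent then the quotient
map `R → R/a` is a homological epimorphism. -/
theorem stmt11 {R : Type u} [CommRing R] [IsDomain R] [IsBezout R] (a : Ideal R) :
    Nonempty ((((Tor (ModuleCat.{u} R) 1).obj (ModuleCat.of R (R ⧸ a))).obj
        (ModuleCat.of R (R ⧸ a))) ≅ ModuleCat.of R a.Cotangent) ∧
    (∀ i : ℕ, 1 < i →
      IsZero (((Tor (ModuleCat.{u} R) i).obj (ModuleCat.of R (R ⧸ a))).obj
        (ModuleCat.of R (R ⧸ a)))) ∧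
    (a * a = a →
      (Function.Bijective (LinearMap.mul' R (R ⧸ a)) ∧
        ∀ i : ℕ, 1 ≤ i →
          IsZero (((Tor (ModuleCat.{u} R) i).obj (ModuleCat.of R (R ⧸ a))).obj
            (ModuleCat.of R (R ⧸ a))))) := by
  obtain ⟨⟨e⟩, hvanish⟩ := Stmt11Aux.tor_main a
  refine ⟨⟨e⟩, hvanish, fun haa => ⟨Stmt11Aux.mul'_bij a, fun i hi => ?_⟩⟩
  rcases eq_or_lt_of_le hi with h1 | h2
  · subst h1
    have hsub : Subsingleton a.Cotangent := a.cotangent_subsingleton_iff.2 haa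
    exact (@ModuleCat.isZero_of_subsingleton R _ (ModuleCat.of R a.Cotangent) hsub).of_iso e
  · exact hvanish i h2
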